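/- For a continuous square-integrable real-valued martingale M on [0,T], the quartic variation vanishes: for any sequence of partitions of [0,T] with mesh tending to zero, the sums ∑_j |M_{t_{j+1}} - M_{t_j}|^4 converge to 0 in probability. -/

import Mathlib

open MeasureTheory Filter Topology ENNReal NNReal

lemma aux_integrable_mul {Ω : Type*} {m0 : MeasurableSpace Ω} {P : Measure Ω}
    {f g : Ω → ℝ} (hf : MemLp f 2 P) (hg : MemLp g 2 P) :
    Integrable (fun x => f x * g x) P := by
  have h1 : Integrable (fun x => ((f x + g x) ^ 2 - f x ^ 2 - g x ^ 2) / 2) P :=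
    (((hf.add hg).integrable_sq.sub hf.integrable_sq).sub hg.integrable_sq).div_const 2
  refine h1.congr (Filter.Eventually.of_forall fun x => ?_)
  ring

/-- Orthogonality of increments: for an L² martingale,
`E[(M_u - M_s)^2] = E[M_u^2] - E[M_s^2]` for `s ≤ u`. -/
lemma aux_increment_sq {Ω : Type*} {m0 : MeasurableSpace Ω} (P : Measure Ω)
    [IsProbabilityMeasure P] (ℱ : Filtration ℝ m0) (M : ℝ → Ω → ℝ)
    (hMart : Martingale M ℱ P) (hL2 : ∀ s : ℝ, MemLp (M s) 2 P)
    {s u : ℝ} (hsu : s ≤ u) :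
    ∫ ω, (M u ω - M s ω) ^ 2 ∂P = (∫ ω, (M u ω) ^ 2 ∂P) - ∫ ω, (M s ω) ^ 2 ∂P := by
  have hcross : ∫ ω, M s ω * M u ω ∂P = ∫ ω, (M s ω) ^ 2 ∂P := by
    have hsm : StronglyMeasurable[ℱ s] (M s) := hMart.stronglyAdapted s
    have hint : Integrable (M s * M u) P := aux_integrable_mul (hL2 s) (hL2 u)
    have h1 : P[M s * M u | ℱ s] =ᵐ[P] M s * P[M u | ℱ s] :=
      condExp_mul_of_stronglyMeasurable_left hsm hint (hMart.integrable u)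
    have h2 : P[M u | ℱ s] =ᵐ[P] M s := hMart.condExp_ae_eq hsu
    have h3 : ∫ ω, (P[M s * M u | ℱ s]) ω ∂P = ∫ ω, (M s * M u) ω ∂P :=
      integral_condExp (ℱ.le s)
    have h4 : P[M s * M u | ℱ s] =ᵐ[P] fun ω => M s ω ^ 2 := by
      filter_upwards [h1, h2] with ω hω1 hω2
      simp only [Pi.mul_apply] at hω1 ⊢
      rw [hω1, hω2]; ring
    calc ∫ ω, M s ω * M u ω ∂P = ∫ ω, (P[M s * M u | ℱ s]) ω ∂P := h3.symm
      _ = ∫ ω, (M s ω) ^ 2 ∂P := integral_congr_ae h4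
  have hiu : Integrable (fun ω => (M u ω) ^ 2) P := (hL2 u).integrable_sq
  have his : Integrable (fun ω => (M s ω) ^ 2) P := (hL2 s).integrable_sq
  have him : Integrable (fun ω => M s ω * M u ω) P := aux_integrable_mul (hL2 s) (hL2 u)
  have hexp : (fun ω => (M u ω - M s ω) ^ 2)
      = fun ω => ((M u ω) ^ 2 + (M s ω) ^ 2) - 2 * (M s ω * M u ω) := by
    funext ω; ring
  have h5 : ∫ ω, ((M u ω ^ 2 + M s ω ^ 2) - 2 * (M s ω * M u ω)) ∂P
      = (∫ ω, (M u ω ^ 2 + M s ω ^ 2) ∂P) - ∫ ω, 2 * (M s ω * M u ω) ∂P :=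
    integral_sub (hiu.add his) (him.const_mul 2)
  have h6 : ∫ ω, (M u ω ^ 2 + M s ω ^ 2) ∂P
      = (∫ ω, M u ω ^ 2 ∂P) + ∫ ω, M s ω ^ 2 ∂P := integral_add hiu his
  rw [hexp, h5, h6, MeasureTheory.integral_const_mul, hcross]
  ring

/-- For a continuous square-integrable real-valued martingale `M` on `[0,T]`,
the quartic variation vanishes: along any sequence of partitions of `[0,T]` with mesh tending
to zero, the sums `∑_j |M_{t_{j+1}} - M_{t_j}|^4` converge to `0` in probability. -/
theorem quartic_variation_tendsto_zero_in_probability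
    {Ω : Type*} {m0 : MeasurableSpace Ω} (P : Measure Ω) [IsProbabilityMeasure P]
    (ℱ : Filtration ℝ m0) (T : ℝ) (hT : 0 < T)
    (M : ℝ → Ω → ℝ)
    (hMart : Martingale M ℱ P)
    (hL2 : ∀ s : ℝ, MemLp (M s) 2 P)
    (hcont : ∀ ω, Continuous fun s => M s ω)
    -- the sequence of partitions of `[0,T]`
    (k : ℕ → ℕ) (t : ℕ → ℕ → ℝ)
    (hmono : ∀ n j, t n j ≤ t n (j + 1))
    (hstart : ∀ n, t n 0 = 0)
    (hend : ∀ n j, k n ≤ j → t n j = T)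
    (hmesh : ∀ ε > (0:ℝ), ∃ N, ∀ n ≥ N, ∀ j, t n (j + 1) - t n j ≤ ε) :
    TendstoInMeasure P
      (fun n ω => ∑ j ∈ Finset.range (k n), |M (t n (j + 1)) ω - M (t n j) ω| ^ 4)
      atTop (fun _ => 0) := by
  -- basic facts about the partition points
  have hmonot : ∀ n, Monotone (t n) := fun n => monotone_nat_of_le_succ (hmono n)
  have htmem : ∀ n j, t n j ∈ Set.Icc (0:ℝ) T := by
    intro n j
    constructor
    · have := hmonot n (Nat.zero_le j); rwa [hstart n] at this
    · have h1 : t n j ≤ t n (max j (k n)) := hmonot n (le_max_left _ _)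
      rwa [hend n (max j (k n)) (le_max_right _ _)] at h1
  -- the quadratic variation sums
  set Q : ℕ → Ω → ℝ :=
    fun n ω => ∑ j ∈ Finset.range (k n), (M (t n (j + 1)) ω - M (t n j) ω) ^ 2 with hQdef
  have hQnonneg : ∀ n ω, 0 ≤ Q n ω :=
    fun n ω => Finset.sum_nonneg fun j _ => sq_nonneg _
  have hQint : ∀ n, Integrable (Q n) P := by
    intro n
    exact integrable_finset_sum _ fun j _ => ((hL2 _).sub (hL2 _)).integrable_sq
  set C : ℝ := ∫ ω, (M T ω) ^ 2 ∂P with hCdef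
  have hC0 : 0 ≤ C := integral_nonneg fun ω => sq_nonneg _
  have hQle : ∀ n, ∫ ω, Q n ω ∂P ≤ C := by
    intro n
    have h1 : ∫ ω, Q n ω ∂P
        = ∑ j ∈ Finset.range (k n), ∫ ω, (M (t n (j + 1)) ω - M (t n j) ω) ^ 2 ∂P :=
      integral_finset_sum _ fun j _ => ((hL2 _).sub (hL2 _)).integrable_sq
    have h2 : ∀ j, ∫ ω, (M (t n (j + 1)) ω - M (t n j) ω) ^ 2 ∂P
        = (∫ ω, (M (t n (j + 1)) ω) ^ 2 ∂P) - ∫ ω, (M (t n j) ω) ^ 2 ∂P :=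
      fun j => aux_increment_sq P ℱ M hMart hL2 (hmono n j)
    have h3 : ∫ ω, Q n ω ∂P
        = (∫ ω, (M (t n (k n)) ω) ^ 2 ∂P) - ∫ ω, (M (t n 0) ω) ^ 2 ∂P := by
      rw [h1]
      simp_rw [h2]
      exact Finset.sum_range_sub (fun j => ∫ ω, (M (t n j) ω) ^ 2 ∂P) (k n)
    rw [h3, hend n (k n) le_rfl]
    have h4 : 0 ≤ ∫ ω, (M (t n 0) ω) ^ 2 ∂P := integral_nonneg fun ω => sq_nonneg _
    rw [hCdef]
    linarith
  -- Markov's inequality for Q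
  have hMarkov : ∀ n (K : ℝ), 0 < K →
      P {ω | K ≤ Q n ω} ≤ ENNReal.ofReal (C / K) := by
    intro n K hK
    have h1 := mul_meas_ge_le_integral_of_nonneg
      (Filter.Eventually.of_forall (hQnonneg n)) (hQint n) K
    have h2 : (P {ω | K ≤ Q n ω}).toReal ≤ C / K := by
      rw [le_div_iff₀ hK]
      calc (P {ω | K ≤ Q n ω}).toReal * K = K * (P {ω | K ≤ Q n ω}).toReal := mul_comm _ _
        _ ≤ ∫ ω, Q n ω ∂P := h1
        _ ≤ C := hQle n
    exact (ENNReal.le_ofReal_iff_toReal_le (measure_ne_top P _)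
      (div_nonneg hC0 hK.le)).mpr h2
  -- measurability
  have hMmeas : ∀ s, Measurable (M s) :=
    fun s => ((hMart.stronglyAdapted s).mono (ℱ.le s)).measurable
  -- the "large increment" events have small probability
  have hB : ∀ c : ℝ, 0 < c →
      Tendsto (fun n => P {ω | ∃ j < k n, c ≤ |M (t n (j + 1)) ω - M (t n j) ω|})
        atTop (𝓝 0) := by
    intro c hc
    set B : ℕ → Set Ω :=
      fun n => {ω | ∃ j < k n, c ≤ |M (t n (j + 1)) ω - M (t n j) ω|} with hBdef
    have hBmeas : ∀ n, MeasurableSet (B n) := by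
      intro n
      have : B n = ⋃ j ∈ Finset.range (k n),
          {ω | c ≤ |M (t n (j + 1)) ω - M (t n j) ω|} := by
        ext ω; simp [hBdef]
      rw [this]
      exact Finset.measurableSet_biUnion _ fun j _ =>
        measurableSet_le measurable_const (((hMmeas _).sub (hMmeas _)).abs)
    have hpt : ∀ ω, ∀ᶠ n in atTop, ω ∉ B n := by
      intro ω
      have huc : UniformContinuousOn (fun s => M s ω) (Set.Icc 0 T) :=
        isCompact_Icc.uniformContinuousOn_of_continuous (hcont ω).continuousOn
      obtain ⟨δ, hδ, hδ'⟩ := Metric.uniformContinuousOn_iff_le.1 huc (c / 2) (half_pos hc)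
      obtain ⟨N, hN⟩ := hmesh δ hδ
      refine eventually_atTop.2 ⟨N, fun n hn => ?_⟩
      rintro ⟨j, hj, hcle⟩
      have hdist : dist (t n (j + 1)) (t n j) ≤ δ := by
        rw [Real.dist_eq, abs_of_nonneg (sub_nonneg.2 (hmono n j))]
        exact hN n hn j
      have := hδ' (t n (j + 1)) (htmem n (j + 1)) (t n j) (htmem n j) hdist
      rw [Real.dist_eq] at this
      linarith
    -- dominated convergence for indicators
    have key : Tendsto (fun n => ∫⁻ ω, (B n).indicator (fun _ => (1:ℝ≥0∞)) ω ∂P)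
        atTop (𝓝 (∫⁻ (_ω : Ω), (0:ℝ≥0∞) ∂P)) := by
      refine tendsto_lintegral_of_dominated_convergence (fun _ => (1:ℝ≥0∞))
        (fun n => measurable_const.indicator (hBmeas n)) ?_ ?_ ?_
      · exact fun n => Filter.Eventually.of_forall fun ω =>
          Set.indicator_le (fun _ _ => le_rfl) ω
      · simp [lintegral_one]
      · refine Filter.Eventually.of_forall fun ω => ?_
        refine Tendsto.congr' ?_ tendsto_const_nhds
        filter_upwards [hpt ω] with n hn
        simp [Set.indicator_of_notMem hn]
    simp only [lintegral_zero] at key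
    refine key.congr fun n => ?_
    exact lintegral_indicator_one (hBmeas n)
  -- main argument
  rw [tendstoInMeasure_iff_dist]
  intro ε hε
  set S : ℕ → Ω → ℝ :=
    fun n ω => ∑ j ∈ Finset.range (k n), |M (t n (j + 1)) ω - M (t n j) ω| ^ 4 with hSdef
  have hSnonneg : ∀ n ω, 0 ≤ S n ω :=
    fun n ω => Finset.sum_nonneg fun j _ => pow_nonneg (abs_nonneg _) 4
  have hSrw : ∀ n, {ω | ε ≤ dist (S n ω) 0} = {ω | ε ≤ S n ω} := by
    intro n; ext ω
    rw [Set.mem_setOf_eq, Set.mem_setOf_eq, Real.dist_eq, sub_zero,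
      abs_of_nonneg (hSnonneg n ω)]
  refine ENNReal.tendsto_nhds_zero.2 fun δ hδ => ?_
  set δr : ℝ := (min δ 1).toReal with hδrdef
  have hmin_ne_top : min δ 1 ≠ ⊤ := ne_top_of_le_ne_top (by simp) (min_le_right _ _)
  have hδr : 0 < δr :=
    ENNReal.toReal_pos (by simp [lt_min_iff, hδ, zero_lt_one, ne_of_gt,
      (lt_min hδ zero_lt_one).ne']) hmin_ne_top
  have hofReal : ENNReal.ofReal δr ≤ δ := by
    rw [hδrdef, ENNReal.ofReal_toReal hmin_ne_top]
    exact min_le_left _ _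
  set K : ℝ := 2 * C / δr + 1 with hKdef
  have hK : 0 < K := by
    have : 0 ≤ 2 * C / δr := div_nonneg (by linarith) hδr.le
    rw [hKdef]; linarith
  have hCK : C / K ≤ δr / 2 := by
    rw [div_le_iff₀ hK]
    have h1 : δr / 2 * K = C + δr / 2 := by
      rw [hKdef]; field_simp
    rw [mul_comm] at h1 ⊢
    rw [h1]; linarith
  set c : ℝ := Real.sqrt (ε / K) with hcdef
  have hc : 0 < c := Real.sqrt_pos.2 (div_pos hε hK)
  have hc2 : c ^ 2 = ε / K := Real.sq_sqrt (div_nonneg hε.le hK.le)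
  have h1 := ENNReal.tendsto_nhds_zero.1 (hB c hc) (ENNReal.ofReal (δr / 2))
    (ENNReal.ofReal_pos.2 (half_pos hδr))
  filter_upwards [h1] with n hn
  have hsubset : {ω | ε ≤ S n ω} ⊆
      {ω | K ≤ Q n ω} ∪ {ω | ∃ j < k n, c ≤ |M (t n (j + 1)) ω - M (t n j) ω|} := by
    intro ω hω
    by_contra hnot
    rw [Set.mem_union, not_or] at hnot
    obtain ⟨hA, hBn⟩ := hnot
    rw [Set.mem_setOf_eq, not_le] at hA
    rw [Set.mem_setOf_eq] at hBn
    push_neg at hBn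
    have hterm : ∀ j ∈ Finset.range (k n),
        |M (t n (j + 1)) ω - M (t n j) ω| ^ 4
          ≤ c ^ 2 * (M (t n (j + 1)) ω - M (t n j) ω) ^ 2 := by
      intro j hj
      have hjlt := Finset.mem_range.1 hj
      have hlt : |M (t n (j + 1)) ω - M (t n j) ω| < c := hBn j hjlt
      have hsq : |M (t n (j + 1)) ω - M (t n j) ω| ^ 2 ≤ c ^ 2 :=
        pow_le_pow_left₀ (abs_nonneg _) hlt.le 2
      calc |M (t n (j + 1)) ω - M (t n j) ω| ^ 4
          = |M (t n (j + 1)) ω - M (t n j) ω| ^ 2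
            * |M (t n (j + 1)) ω - M (t n j) ω| ^ 2 := by ring
        _ ≤ c ^ 2 * |M (t n (j + 1)) ω - M (t n j) ω| ^ 2 :=
            mul_le_mul_of_nonneg_right hsq (pow_nonneg (abs_nonneg _) 2)
        _ = c ^ 2 * (M (t n (j + 1)) ω - M (t n j) ω) ^ 2 := by rw [sq_abs]
    have hS1 : S n ω ≤ c ^ 2 * Q n ω := by
      rw [hSdef, hQdef]
      calc ∑ j ∈ Finset.range (k n), |M (t n (j + 1)) ω - M (t n j) ω| ^ 4
          ≤ ∑ j ∈ Finset.range (k n),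
              c ^ 2 * (M (t n (j + 1)) ω - M (t n j) ω) ^ 2 :=
            Finset.sum_le_sum hterm
        _ = c ^ 2 * ∑ j ∈ Finset.range (k n), (M (t n (j + 1)) ω - M (t n j) ω) ^ 2 :=
            (Finset.mul_sum _ _ _).symm
    have hS2 : c ^ 2 * Q n ω < c ^ 2 * K :=
      mul_lt_mul_of_pos_left hA (pow_pos hc 2)
    have hS3 : c ^ 2 * K = ε := by
      rw [hc2]; field_simp
    have : ω ∈ {ω | ε ≤ S n ω} := hω
    rw [Set.mem_setOf_eq] at this
    linarith
  calc P {ω | ε ≤ dist (S n ω) ((fun _ => (0:ℝ)) ω)}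
      = P {ω | ε ≤ S n ω} := by rw [show {ω | ε ≤ dist (S n ω) ((fun _ => (0:ℝ)) ω)}
          = {ω | ε ≤ dist (S n ω) 0} from rfl, hSrw n]
    _ ≤ P ({ω | K ≤ Q n ω}
        ∪ {ω | ∃ j < k n, c ≤ |M (t n (j + 1)) ω - M (t n j) ω|}) := measure_mono hsubset
    _ ≤ P {ω | K ≤ Q n ω}
        + P {ω | ∃ j < k n, c ≤ |M (t n (j + 1)) ω - M (t n j) ω|} := measure_union_le _ _
    _ ≤ ENNReal.ofReal (C / K) + ENNReal.ofReal (δr / 2) := add_le_add (hMarkov n K hK) hn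
    _ ≤ ENNReal.ofReal (δr / 2) + ENNReal.ofReal (δr / 2) :=
        add_le_add_left (ENNReal.ofReal_le_ofReal hCK) _
    _ = ENNReal.ofReal δr := by
        rw [← ENNReal.ofReal_add (by linarith) (by linarith)]; norm_num
    _ ≤ δ := hofReal
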